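/- Let d ≥ 2 be an integer, let b, c ∈ [0,1] with c ≤ b, and let u, v, w be reals with 0 ≤ u ≤ b and 0 ≤ v ≤ c and 0 ≤ w ≤ c. Define Q := d·u^{d−1}·(1+v+v·w)^d/(1+u+u·v)^{d+1}, R := d·u^d·(1+v+v·w)^{d−1}·(1+u·w+w)/(1+u+u·v)^{d+1}, and T := d·u^d·v·(1+v+v·w)^{d−1}/(1+u+u·v)^d. Then: (i) if d = 2, Q ≤ 4d(d−1)^{d−1}(1+c+c²)^d/((d+1)^{d+1}(1+c)^{d−1}); (ii) if 3 ≤ d ≤ 7 and 1 + 2b(1+c) ≤ d, then Q ≤ d·b^{d−1}(1+c+c²)^d/((1+b)(1+b+b·c)^d); (iii) R ≤ Q·b·(1+c+b·c); (iv) T ≤ d·b^d·c·(1+c+c²)^{d−1}/(1+b+b·c)^d. -/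

import Mathlib

lemma amgm_pow (n : ℕ) (l : ℝ) (hl : 0 ≤ l) :
    l ^ n ≤ ((n * l + 2) / (n + 2)) ^ (n + 2) := by
  have hn2 : (0:ℝ) < (n:ℝ) + 2 := by positivity
  set α : ℝ := (n:ℝ) / ((n:ℝ) + 2) with hα
  have hα0 : 0 ≤ α := by positivity
  have hβ0 : (0:ℝ) ≤ 2 / ((n:ℝ) + 2) := by positivity
  have hsum : α + 2 / ((n:ℝ) + 2) = 1 := by rw [hα, ← add_div, div_self hn2.ne']
  have key : l ^ α * (1:ℝ) ^ (2 / ((n:ℝ)+2)) ≤ α * l + (2 / ((n:ℝ)+2)) * 1 :=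
    Real.geom_mean_le_arith_mean2_weighted hα0 hβ0 hl (by norm_num) hsum
  rw [Real.one_rpow, mul_one, mul_one] at key
  have key2 : l ^ α ≤ (n * l + 2) / ((n:ℝ) + 2) := by
    rw [hα]; rw [hα] at key; field_simp at key ⊢; linarith
  have hle : (l ^ α) ^ (n + 2) ≤ ((n * l + 2) / ((n:ℝ) + 2)) ^ (n + 2) :=
    pow_le_pow_left₀ (Real.rpow_nonneg hl _) key2 _
  calc l ^ n = (l ^ α) ^ (n + 2) := by
        rw [← Real.rpow_natCast (l ^ α) (n + 2), ← Real.rpow_mul hl]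
        rw [← Real.rpow_natCast l n]
        congr 1
        push_cast
        rw [hα]
        exact (div_mul_cancel₀ _ hn2.ne').symm
    _ ≤ _ := hle

lemma mono_key (n : ℕ) (hn : 1 ≤ n) (t τ : ℝ) (ht : 0 ≤ t) (htτ : t ≤ τ)
    (hτn : 2 * τ ≤ (n:ℝ)) :
    t ^ n * (1 + τ) ^ (n + 2) ≤ τ ^ n * (1 + t) ^ (n + 2) := by
  have hτ0 : 0 ≤ τ := le_trans ht htτ
  rcases eq_or_lt_of_le ht with h0 | h0
  · rw [← h0, zero_pow (by omega)]
    have : (0:ℝ) ≤ τ ^ n * (1 + 0) ^ (n + 2) := by positivity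
    simpa using this.trans_eq (by norm_num)
  · have hτp : 0 < τ := lt_of_lt_of_le h0 htτ
    set l : ℝ := t / τ with hl
    have hl0 : 0 ≤ l := by positivity
    have hl1 : l ≤ 1 := div_le_one_of_le₀ htτ hτ0
    have hlt : l * τ = t := div_mul_cancel₀ t hτp.ne'
    have h1 : l ^ n ≤ ((n * l + 2) / (n + 2)) ^ (n + 2) := amgm_pow n l hl0
    have h2 : (n * l + 2) / ((n:ℝ) + 2) * (1 + τ) ≤ 1 + t := by
      rw [div_mul_eq_mul_div, div_le_iff₀ (by positivity)]
      nlinarith [mul_nonneg (sub_nonneg.2 hl1) (sub_nonneg.2 hτn)]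
    have h3 : (((n * l + 2) / ((n:ℝ) + 2)) * (1 + τ)) ^ (n + 2) ≤ (1 + t) ^ (n + 2) :=
      pow_le_pow_left₀ (by positivity) h2 _
    calc t ^ n * (1 + τ) ^ (n + 2) = (l ^ n * (1+τ)^(n+2)) * τ ^ n := by
          rw [← hlt]; ring
      _ ≤ (((n * l + 2) / ((n:ℝ) + 2)) ^ (n+2) * (1+τ)^(n+2)) * τ ^ n := by
          apply mul_le_mul_of_nonneg_right _ (by positivity)
          exact mul_le_mul_of_nonneg_right h1 (by positivity)
      _ = (((n * l + 2) / ((n:ℝ) + 2)) * (1 + τ)) ^ (n + 2) * τ ^ n := by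
          rw [mul_pow]
      _ ≤ (1 + t) ^ (n + 2) * τ ^ n := mul_le_mul_of_nonneg_right h3 (by positivity)
      _ = τ ^ n * (1 + t) ^ (n + 2) := by ring

set_option maxHeartbeats 1600000 in
theorem stmt_10 (d : ℕ) (hd : 2 ≤ d) (b c : ℝ)
    (hb : b ∈ Set.Icc (0 : ℝ) 1) (hc : c ∈ Set.Icc (0 : ℝ) 1) (hcb : c ≤ b)
    (u v w : ℝ) (hu0 : 0 ≤ u) (hub : u ≤ b) (hv0 : 0 ≤ v) (hvc : v ≤ c)
    (hw0 : 0 ≤ w) (hwc : w ≤ c) :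
    (d = 2 →
      (d : ℝ) * u ^ (d - 1) * (1 + v + v * w) ^ d / (1 + u + u * v) ^ (d + 1) ≤
        4 * (d : ℝ) * ((d : ℝ) - 1) ^ (d - 1) * (1 + c + c ^ 2) ^ d /
          (((d : ℝ) + 1) ^ (d + 1) * (1 + c) ^ (d - 1))) ∧
    (3 ≤ d → d ≤ 7 → 1 + 2 * b * (1 + c) ≤ (d : ℝ) →
      (d : ℝ) * u ^ (d - 1) * (1 + v + v * w) ^ d / (1 + u + u * v) ^ (d + 1) ≤
        (d : ℝ) * b ^ (d - 1) * (1 + c + c ^ 2) ^ d /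
          ((1 + b) * (1 + b + b * c) ^ d)) ∧
    ((d : ℝ) * u ^ d * (1 + v + v * w) ^ (d - 1) * (1 + u * w + w) / (1 + u + u * v) ^ (d + 1) ≤
      (d : ℝ) * u ^ (d - 1) * (1 + v + v * w) ^ d / (1 + u + u * v) ^ (d + 1) *
        (b * (1 + c + b * c))) ∧
    ((d : ℝ) * u ^ d * v * (1 + v + v * w) ^ (d - 1) / (1 + u + u * v) ^ d ≤
      (d : ℝ) * b ^ d * c * (1 + c + c ^ 2) ^ (d - 1) / (1 + b + b * c) ^ d) := by
  obtain ⟨hb0, hb1⟩ := hb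
  obtain ⟨hc0, hc1⟩ := hc
  obtain ⟨n, rfl⟩ : ∃ n, d = n + 1 := ⟨d - 1, by omega⟩
  have hn : 1 ≤ n := by omega
  simp only [Nat.add_sub_cancel]
  have hKpos : (0:ℝ) < 1 + u + u * v := by positivity
  have hLpos : (0:ℝ) < 1 + b + b * c := by positivity
  have hZpos : (0:ℝ) < 1 + b + b * v := by positivity
  have hApos : (0:ℝ) < 1 + v + v * w := by positivity
  have hA1 : (1:ℝ) ≤ 1 + v + v * w := by nlinarith [mul_nonneg hv0 hw0]
  have hAc : 1 + v + v * w ≤ 1 + v + v * c := by nlinarith [mul_le_mul_of_nonneg_left hwc hv0]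
  have hF3 : (1 + v + v * c) * (1 + b + b * c) ≤ (1 + c + c ^ 2) * (1 + b + b * v) := by
    nlinarith [mul_nonneg (sub_nonneg.2 hvc) (show (0:ℝ) ≤ 1 + c + b * c by positivity)]
  have hAL : (1 + v + v * w) * (1 + b + b * c) ≤ (1 + c + c ^ 2) * (1 + b + b * v) :=
    le_trans (mul_le_mul_of_nonneg_right hAc hLpos.le) hF3
  refine ⟨?_, ?_, ?_, ?_⟩
  · -- part (i), d = 2
    intro h2
    obtain rfl : n = 1 := by omega
    push_cast
    norm_num
    rw [div_le_div_iff₀ (by positivity) (by positivity)]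
    have h1 : 27 * (u * (1 + v)) ≤ 4 * (1 + u + u * v) ^ 3 := by
      nlinarith [mul_nonneg (sq_nonneg (2*(u+u*v)-1)) (show (0:ℝ) ≤ u + u*v + 4 by positivity)]
    have h2' : (1+v+v*c)^2*(1+c) ≤ (1+c+c^2)^2*(1+v) := by
      nlinarith [mul_nonneg (sub_nonneg.2 hvc)
        (show (0:ℝ) ≤ (1+c)^3*v + 1+3*c+2*c^2+c^3 by positivity)]
    have hA2 : (1+v+v*w)^2 ≤ (1+v+v*c)^2 := pow_le_pow_left₀ hApos.le hAc 2
    calc 2 * u * (1+v+v*w)^2 * (27*(1+c))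
        = 54 * (u * ((1+v+v*w)^2 * (1+c))) := by ring
      _ ≤ 54 * (u * ((1+v+v*c)^2 * (1+c))) := by
          apply mul_le_mul_of_nonneg_left _ (by norm_num)
          exact mul_le_mul_of_nonneg_left
            (mul_le_mul_of_nonneg_right hA2 (by linarith)) hu0
      _ ≤ 54 * (u * ((1+c+c^2)^2 * (1+v))) := by
          apply mul_le_mul_of_nonneg_left _ (by norm_num)
          exact mul_le_mul_of_nonneg_left h2' hu0
      _ = 2 * (1+c+c^2)^2 * (27 * (u * (1+v))) := by ring
      _ ≤ 2 * (1+c+c^2)^2 * (4 * (1+u+u*v)^3) := by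
          apply mul_le_mul_of_nonneg_left h1 (by positivity)
      _ = 8 * (1+c+c^2)^2 * (1+u+u*v)^3 := by ring
  · -- part (ii)
    intro h3 h7 hbd
    push_cast at hbd
    have hbv : 2 * (b * (1 + v)) ≤ (n:ℝ) := by
      nlinarith [mul_le_mul_of_nonneg_left hvc hb0]
    have mono := mono_key n hn (u*(1+v)) (b*(1+v)) (by positivity)
      (mul_le_mul_of_nonneg_right hub (by linarith)) hbv
    rw [mul_pow u (1+v), mul_pow b (1+v),
      show (1:ℝ)+b*(1+v) = 1+b+b*v from by ring,
      show (1:ℝ)+u*(1+v) = 1+u+u*v from by ring] at mono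
    have f1 : u^n * (1+v)^n * (1+b+b*v)^(n+2) ≤ b^n * (1+v)^n * (1+u+u*v)^(n+2) := mono
    have hALpow : ((1+v+v*w)*(1+b+b*c))^(n+1) ≤ ((1+c+c^2)*(1+b+b*v))^(n+1) :=
      pow_le_pow_left₀ (by positivity) hAL _
    have h1b : (1+b:ℝ) ≤ 1+b+b*v := by nlinarith [mul_nonneg hb0 hv0]
    rw [div_le_div_iff₀ (by positivity) (by positivity)]
    have big : (u^n * (1+v)^n * (1+b+b*v)^(n+2)) * ((1+v+v*w)*(1+b+b*c))^(n+1) * (1+b)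
        ≤ (b^n * (1+v)^n * (1+u+u*v)^(n+2)) * ((1+c+c^2)*(1+b+b*v))^(n+1) * (1+b+b*v) := by
      apply mul_le_mul (mul_le_mul f1 hALpow (by positivity) (by positivity)) h1b
        (by linarith) (by positivity)
    have big2 := mul_le_mul_of_nonneg_left big (show (0:ℝ) ≤ (n:ℝ)+1 by positivity)
    have key : ((n:ℝ)+1) * u^n * (1+v+v*w)^(n+1) * ((1+b) * (1+b+b*c)^(n+1))
          * ((1+v)^n * (1+b+b*v)^(n+2))
        ≤ ((n:ℝ)+1) * b^n * (1+c+c^2)^(n+1) * (1+u+u*v)^(n+1+1)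
          * ((1+v)^n * (1+b+b*v)^(n+2)) := by
      calc ((n:ℝ)+1) * u^n * (1+v+v*w)^(n+1) * ((1+b) * (1+b+b*c)^(n+1))
            * ((1+v)^n * (1+b+b*v)^(n+2))
          = ((n:ℝ)+1) * ((u^n * (1+v)^n * (1+b+b*v)^(n+2))
            * ((1+v+v*w)*(1+b+b*c))^(n+1) * (1+b)) := by
            rw [mul_pow (1+v+v*w) (1+b+b*c)]; ring
        _ ≤ ((n:ℝ)+1) * ((b^n * (1+v)^n * (1+u+u*v)^(n+2))
            * ((1+c+c^2)*(1+b+b*v))^(n+1) * (1+b+b*v)) := big2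
        _ = ((n:ℝ)+1) * b^n * (1+c+c^2)^(n+1) * (1+u+u*v)^(n+1+1)
            * ((1+v)^n * (1+b+b*v)^(n+2)) := by
            rw [mul_pow (1+c+c^2) (1+b+b*v)]; ring
    push_cast
    refine le_of_mul_le_mul_right ?_
      (show (0:ℝ) < (1+v)^n * (1+b+b*v)^(n+2) by positivity)
    calc ((n:ℝ)+1) * u^n * (1+v+v*w)^(n+1) * ((1+b) * (1+b+b*c)^(n+1))
          * ((1+v)^n * (1+b+b*v)^(n+2))
        ≤ ((n:ℝ)+1) * b^n * (1+c+c^2)^(n+1) * (1+u+u*v)^(n+1+1)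
          * ((1+v)^n * (1+b+b*v)^(n+2)) := key
      _ = ((n:ℝ)+1) * b^n * (1+c+c^2)^(n+1) * (1+u+u*v)^(n+1+1)
          * ((1+v)^n * (1+b+b*v)^(n+2)) := by ring
  · -- part (iii)
    rw [div_mul_eq_mul_div, div_le_div_iff₀ (by positivity) (by positivity)]
    apply mul_le_mul_of_nonneg_right _ (by positivity)
    have huw : u*w ≤ b*c := mul_le_mul hub hwc hw0 hb0
    have huuw : u*(u*w) ≤ b*(b*c) := mul_le_mul hub huw (mul_nonneg hu0 hw0) hb0
    have h : u*(1+u*w+w) ≤ (1+v+v*w)*(b*(1+c+b*c)) := by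
      have hbc : u*(1+u*w+w) ≤ b*(1+c+b*c) := by nlinarith [huw, huuw]
      have : b*(1+c+b*c) ≤ (1+v+v*w)*(b*(1+c+b*c)) := by
        nlinarith [mul_nonneg (mul_nonneg hb0 (show (0:ℝ) ≤ 1+c+b*c by positivity))
          (sub_nonneg.2 hA1)]
      linarith
    push_cast
    calc ((n:ℝ)+1) * u^(n+1) * (1+v+v*w)^n * (1+u*w+w)
        = (((n:ℝ)+1) * u^n * (1+v+v*w)^n) * (u*(1+u*w+w)) := by ring
      _ ≤ (((n:ℝ)+1) * u^n * (1+v+v*w)^n) * ((1+v+v*w)*(b*(1+c+b*c))) := by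
          apply mul_le_mul_of_nonneg_left h (by positivity)
      _ = ((n:ℝ)+1) * u^n * (1+v+v*w)^(n+1) * (b*(1+c+b*c)) := by ring
  · -- part (iv)
    rw [div_le_div_iff₀ (by positivity) (by positivity)]
    have g1 : u*(1+b+b*v) ≤ b*(1+u+u*v) := by nlinarith [hub]
    have g1d : (u*(1+b+b*v))^(n+1) ≤ (b*(1+u+u*v))^(n+1) :=
      pow_le_pow_left₀ (by positivity) g1 _
    have g2 : v*(1+b+b*c) ≤ c*(1+b+b*v) := by
      nlinarith [mul_le_mul_of_nonneg_right hvc hb0]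
    have g3n : ((1+v+v*w)*(1+b+b*c))^n ≤ ((1+c+c^2)*(1+b+b*v))^n :=
      pow_le_pow_left₀ (by positivity) hAL _
    have big : ((u*(1+b+b*v))^(n+1) * (v*(1+b+b*c))) * ((1+v+v*w)*(1+b+b*c))^n
        ≤ ((b*(1+u+u*v))^(n+1) * (c*(1+b+b*v))) * ((1+c+c^2)*(1+b+b*v))^n := by
      apply mul_le_mul (mul_le_mul g1d g2 (by positivity) (by positivity)) g3n
        (by positivity) (by positivity)
    have big2 := mul_le_mul_of_nonneg_left big (show (0:ℝ) ≤ (n:ℝ)+1 by positivity)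
    have key : ((n:ℝ)+1) * u^(n+1) * v * (1+v+v*w)^n * (1+b+b*c)^(n+1)
          * (1+b+b*v)^(n+1)
        ≤ ((n:ℝ)+1) * b^(n+1) * c * (1+c+c^2)^n * (1+u+u*v)^(n+1)
          * (1+b+b*v)^(n+1) := by
      calc ((n:ℝ)+1) * u^(n+1) * v * (1+v+v*w)^n * (1+b+b*c)^(n+1) * (1+b+b*v)^(n+1)
          = ((n:ℝ)+1) * (((u*(1+b+b*v))^(n+1) * (v*(1+b+b*c)))
            * ((1+v+v*w)*(1+b+b*c))^n) := by
            rw [mul_pow u (1+b+b*v), mul_pow (1+v+v*w) (1+b+b*c)]; ring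
        _ ≤ ((n:ℝ)+1) * (((b*(1+u+u*v))^(n+1) * (c*(1+b+b*v)))
            * ((1+c+c^2)*(1+b+b*v))^n) := big2
        _ = ((n:ℝ)+1) * b^(n+1) * c * (1+c+c^2)^n * (1+u+u*v)^(n+1)
            * (1+b+b*v)^(n+1) := by
            rw [mul_pow b (1+u+u*v), mul_pow (1+c+c^2) (1+b+b*v)]; ring
    push_cast
    refine le_of_mul_le_mul_right ?_
      (show (0:ℝ) < (1+b+b*v)^(n+1) by positivity)
    exact key
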